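/- Let A, B, B', C' be complex-valued multiplicative characters of a finite field F_q with q elements, let x ∈ F_q with x ≠ 1, and let y ∈ F_q. Then F₂(A;B,B';B,C';x,y) = -ε(x)·Ā(1-x)·₂F₁(A,B';C' | y/(1-x)) + B̄(x)·{AB̄ choose B̄}·₂F₁(AB̄, B'; C' | y) + (q-1)·δ(AB̄)·Ā(-x)·C̄'(y)·(B̄'C')(1-y). -/

import Mathlib

open Finset

noncomputable instance {F : Type*} [Field F] [Fintype F] : Fintype (MulChar F ℂ) :=
  Fintype.ofFinite _

/-- Finite-field binomial coefficient `{A choose B} = B(-1) · J(A, B̄)`,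
where `J(χ,λ) = ∑_u χ(u)·λ(1-u)` is the Jacobi sum. -/
noncomputable def binom {F : Type*} [Field F] [Fintype F] (A B : MulChar F ℂ) : ℂ :=
  B (-1) * ∑ u : F, A u * B⁻¹ (1 - u)

/-- Finite-field Gauss hypergeometric series
`₂F₁(A,B;C|x) = ε(x)·(BC)(-1)·∑_y B(y)·(B̄C)(1-y)·Ā(1-xy)`. -/
noncomputable def gauss2F1 {F : Type*} [Field F] [Fintype F]
    (A B C : MulChar F ℂ) (x : F) : ℂ :=
  (1 : MulChar F ℂ) x * (B * C) (-1) *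
    ∑ y : F, B y * (B⁻¹ * C) (1 - y) * A⁻¹ (1 - x * y)

/-- Finite-field `₃F₂` hypergeometric series. -/
noncomputable def hyper3F2 {F : Type*} [Field F] [Fintype F]
    (A₀ A₁ A₂ B₁ B₂ : MulChar F ℂ) (x : F) : ℂ :=
  ((Fintype.card F : ℂ) - 1)⁻¹ *
    ∑ χ : MulChar F ℂ,
      binom (A₀ * χ) χ * binom (A₁ * χ) (B₁ * χ) * binom (A₂ * χ) (B₂ * χ) * χ x

/-- Finite-field Appell series
`F₂(A;B,B';C,C';x,y) = ε(xy)·(BB'CC')(-1)·∑_{u,v} B(u)B'(v)(B̄C)(1-u)(B̄'C')(1-v)·Ā(1-ux-vy)`. -/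
noncomputable def appellF2 {F : Type*} [Field F] [Fintype F]
    (A B B' C C' : MulChar F ℂ) (x y : F) : ℂ :=
  (1 : MulChar F ℂ) (x * y) * (B * B' * C * C') (-1) *
    ∑ u : F, ∑ v : F,
      B u * B' v * (B⁻¹ * C) (1 - u) * (B'⁻¹ * C') (1 - v) * A⁻¹ (1 - u * x - v * y)

open scoped Classical in
/-- `δ(x) = 1` if `x = 0`, and `0` otherwise. -/
noncomputable def deltaF {F : Type*} [Field F] (x : F) : ℂ :=
  if x = 0 then 1 else 0

open scoped Classical in
/-- `δ(χ) = 1` if `χ = ε` (the trivial character), and `0` otherwise. -/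
noncomputable def deltaChar {F : Type*} [Field F] [Fintype F] (χ : MulChar F ℂ) : ℂ :=
  if χ = 1 then 1 else 0

section Aux

open scoped Classical

variable {F : Type*} [Field F] [Fintype F]

private lemma mc_one_apply (a : F) :
    (1 : MulChar F ℂ) a = if a = 0 then 0 else 1 := by
  split_ifs with h
  · rw [h, MulChar.map_zero]
  · exact MulChar.one_apply (isUnit_iff_ne_zero.mpr h)

private lemma mc_sum (χ : MulChar F ℂ) :
    ∑ u : F, χ u = if χ = 1 then ((Fintype.card F : ℂ) - 1) else 0 := by
  split_ifs with h
  · subst h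
    have h1 : ∀ u : F, (1 : MulChar F ℂ) u = 1 - (if u = 0 then 1 else 0) := by
      intro u; rw [mc_one_apply]; split_ifs <;> ring
    rw [Finset.sum_congr rfl fun u _ => h1 u, Finset.sum_sub_distrib,
      Finset.sum_const, Finset.sum_ite_eq' univ (0 : F) (fun _ => (1 : ℂ))]
    simp [Finset.card_univ]
  · exact MulChar.sum_eq_zero_of_ne_one h

private lemma mc_neg_one_sq (χ : MulChar F ℂ) : χ (-1) * χ (-1) = 1 := by
  rw [← map_mul]; norm_num

/-- Key shift lemma: `∑_u B(u)·Ā(t - u·x)` for `x ≠ 0`. -/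
private lemma sum_shift (A B : MulChar F ℂ) {x : F} (hx : x ≠ 0) (t : F) :
    ∑ u : F, B u * A⁻¹ (t - u * x) =
      B⁻¹ x * (B * A⁻¹) t * (∑ s : F, B s * A⁻¹ (1 - s)) +
      (if t = 0 then A⁻¹ (-x) * ∑ w : F, (B * A⁻¹) w else 0) := by
  rcases eq_or_ne t 0 with rfl | ht
  · rw [if_pos rfl, MulChar.map_zero, mul_zero, zero_mul, zero_add, Finset.mul_sum]
    apply Finset.sum_congr rfl
    intro u _
    have h0 : (0 : F) - u * x = -x * u := by ring
    rw [h0, map_mul, MulChar.mul_apply]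
    ring
  · rw [if_neg ht, add_zero, Finset.mul_sum]
    refine (Fintype.sum_equiv (Equiv.mulLeft₀ (t * x⁻¹) (mul_ne_zero ht (inv_ne_zero hx)))
      (fun s => B⁻¹ x * (B * A⁻¹) t * (B s * A⁻¹ (1 - s)))
      (fun u => B u * A⁻¹ (t - u * x)) (fun s => ?_)).symm
    have harg : t - t * x⁻¹ * s * x = t * (1 - s) := by field_simp
    show B⁻¹ x * (B * A⁻¹) t * (B s * A⁻¹ (1 - s))
        = B (t * x⁻¹ * s) * A⁻¹ (t - t * x⁻¹ * s * x)
    rw [harg, map_mul, map_mul, map_mul, MulChar.mul_apply, MulChar.inv_apply' B]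
    ring

private lemma binom_eq (A B : MulChar F ℂ) :
    binom (A * B⁻¹) B⁻¹ = ∑ s : F, B s * A⁻¹ (1 - s) := by
  unfold binom
  rw [inv_inv]
  have step1 : ∑ u : F, (A * B⁻¹) u * B (1 - u)
      = ∑ u : F, (A * B⁻¹) u⁻¹ * B (1 - u⁻¹) :=
    (Fintype.sum_equiv (Equiv.inv F) (fun u => (A * B⁻¹) u⁻¹ * B (1 - u⁻¹))
      (fun u => (A * B⁻¹) u * B (1 - u)) (fun u => rfl)).symm
  have step2 : ∀ u : F, (A * B⁻¹) u⁻¹ * B (1 - u⁻¹)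
      = B (-1) * (A⁻¹ u * B (1 - u)) := by
    intro u
    rcases eq_or_ne u 0 with rfl | hu
    · rw [inv_zero, MulChar.map_zero, MulChar.map_zero]; ring
    · have harg : 1 - u⁻¹ = u⁻¹ * (-1) * (1 - u) := by field_simp; ring
      rw [harg, map_mul, map_mul, MulChar.mul_apply, MulChar.inv_apply' A,
        MulChar.inv_apply' B, inv_inv]
      have h1 : B u⁻¹ * B u = 1 := by rw [← map_mul, inv_mul_cancel₀ hu, map_one]
      linear_combination (A u⁻¹ * B (-1) * B (1 - u)) * h1
  have step4 : ∑ u : F, A⁻¹ u * B (1 - u) = ∑ s : F, B s * A⁻¹ (1 - s) :=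
    (Fintype.sum_equiv (Equiv.subLeft (1 : F)) (fun s => B s * A⁻¹ (1 - s))
      (fun u => A⁻¹ u * B (1 - u)) (fun s => by
        show B s * A⁻¹ (1 - s) = A⁻¹ (1 - s) * B (1 - (1 - s))
        rw [sub_sub_cancel]; ring)).symm
  rw [step1, Finset.sum_congr rfl fun u _ => step2 u, ← Finset.mul_sum, step4,
    MulChar.inv_apply' B, inv_neg_one, ← mul_assoc, mc_neg_one_sq, one_mul]

/-- The inner `u`-sum of the Appell series with `C = B`. -/
private lemma inner_u (A B : MulChar F ℂ) {x : F} (hx : x ≠ 0) (t : F) :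
    ∑ u : F, B u * (B⁻¹ * B) (1 - u) * A⁻¹ (t - u * x) =
      B⁻¹ x * (B * A⁻¹) t * (∑ s : F, B s * A⁻¹ (1 - s))
      + (if t = 0 then A⁻¹ (-x) * ∑ w : F, (B * A⁻¹) w else 0)
      - A⁻¹ (t - x) := by
  have h1 : ∀ u : F, B u * (B⁻¹ * B) (1 - u) * A⁻¹ (t - u * x)
      = B u * A⁻¹ (t - u * x) - (if u = 1 then B u * A⁻¹ (t - u * x) else 0) := by
    intro u
    rw [inv_mul_cancel, mc_one_apply]
    rcases eq_or_ne u 1 with rfl | hu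
    · rw [if_pos (by ring), if_pos rfl]; ring
    · rw [if_neg (sub_ne_zero.mpr fun h => hu h.symm), if_neg hu]; ring
  rw [Finset.sum_congr rfl fun u _ => h1 u, Finset.sum_sub_distrib,
    Finset.sum_ite_eq' univ (1 : F) (fun u => B u * A⁻¹ (t - u * x)),
    if_pos (Finset.mem_univ _), sum_shift A B hx t, map_one, one_mul, one_mul]

private lemma char_key (B' C' : MulChar F ℂ) {y : F} (hy : y ≠ 0) :
    (B' * C') (-1) * (B' y⁻¹ * (B'⁻¹ * C') (1 - y⁻¹)) =
      C'⁻¹ y * (B'⁻¹ * C') (1 - y) := by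
  have harg : 1 - y⁻¹ = y⁻¹ * (-1) * (1 - y) := by field_simp; ring
  rw [harg, map_mul, map_mul]
  simp only [MulChar.mul_apply, MulChar.inv_apply']
  rw [inv_inv, inv_neg_one]
  have h1 : B' y⁻¹ * B' y = 1 := by rw [← map_mul, inv_mul_cancel₀ hy, map_one]
  have h2 : B' (-1) * B' (-1) = 1 := mc_neg_one_sq B'
  have h3 : C' (-1) * C' (-1) = 1 := mc_neg_one_sq C'
  linear_combination (C' y⁻¹ * B' (1 - y)⁻¹ * C' (1 - y)) *
      ((B' (-1) * B' (-1)) * (C' (-1) * C' (-1))) * h1 +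
    (C' y⁻¹ * B' (1 - y)⁻¹ * C' (1 - y)) * (B' (-1) * B' (-1)) * h3 +
    (C' y⁻¹ * B' (1 - y)⁻¹ * C' (1 - y)) * h2

end Aux

/-- reduction formula for `F₂(A;B,B';B,C';x,y)`, `x ≠ 1`. -/
theorem appellF2_C_eq_B {F : Type*} [Field F] [Fintype F]
    (A B B' C' : MulChar F ℂ) (x y : F) (hx : x ≠ 1) :
    appellF2 A B B' B C' x y =
      -(1 : MulChar F ℂ) x * A⁻¹ (1 - x) * gauss2F1 A B' C' (y / (1 - x)) +
      B⁻¹ x * binom (A * B⁻¹) B⁻¹ * gauss2F1 (A * B⁻¹) B' C' y +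
      ((Fintype.card F : ℂ) - 1) * deltaChar (A * B⁻¹) * A⁻¹ (-x) * C'⁻¹ y *
        (B'⁻¹ * C') (1 - y) := by
  classical
  rcases eq_or_ne x 0 with rfl | hx0
  · have h1 : (1 : MulChar F ℂ) ((0 : F) * y) = 0 := by rw [zero_mul, MulChar.map_zero]
    have h2 : (1 : MulChar F ℂ) (0 : F) = 0 := MulChar.map_zero _
    have h3 : B⁻¹ (0 : F) = 0 := MulChar.map_zero _
    have h4 : A⁻¹ (-(0 : F)) = 0 := by rw [neg_zero, MulChar.map_zero]
    simp only [appellF2]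
    rw [h1, h2, h3, h4]
    ring
  have hx1 : (1 : F) - x ≠ 0 := sub_ne_zero.mpr fun h => hx h.symm
  have e_x : (1 : MulChar F ℂ) x = 1 := MulChar.one_apply (isUnit_iff_ne_zero.mpr hx0)
  have e_xy : (1 : MulChar F ℂ) (x * y) = (1 : MulChar F ℂ) y := by
    rw [map_mul, e_x, one_mul]
  -- G0: expand the Appell sum, summing over u first.
  have G0 : appellF2 A B B' B C' x y =
      ∑ v : F, (1 : MulChar F ℂ) y * (B' * C') (-1) *
        (B' v * (B'⁻¹ * C') (1 - v)) *
        (B⁻¹ x * (B * A⁻¹) (1 - v * y) * (∑ s : F, B s * A⁻¹ (1 - s))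
          + (if 1 - v * y = 0 then A⁻¹ (-x) * ∑ w : F, (B * A⁻¹) w else 0)
          - A⁻¹ (1 - x - v * y)) := by
    simp only [appellF2]
    rw [Finset.sum_comm, e_xy]
    have hneg : (B * B' * B * C') (-1) = (B' * C') (-1) := by
      simp only [MulChar.mul_apply]
      linear_combination (B' (-1) * C' (-1)) * mc_neg_one_sq B
    rw [hneg, Finset.mul_sum]
    refine Finset.sum_congr rfl fun v _ => ?_
    have hterm : ∀ u : F,
        B u * B' v * (B⁻¹ * B) (1 - u) * (B'⁻¹ * C') (1 - v) * A⁻¹ (1 - u * x - v * y)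
        = (B' v * (B'⁻¹ * C') (1 - v)) *
            (B u * (B⁻¹ * B) (1 - u) * A⁻¹ (1 - v * y - u * x)) := by
      intro u
      have harg : 1 - u * x - v * y = 1 - v * y - u * x := by ring
      rw [harg]; ring
    rw [Finset.sum_congr rfl fun u _ => hterm u, ← Finset.mul_sum,
      inner_u A B hx0 (1 - v * y)]
    have harg2 : 1 - v * y - x = 1 - x - v * y := by ring
    rw [harg2]
    ring
  -- G1: the first Gauss term.
  have hAsplit : ∀ v : F, A⁻¹ (1 - x) * A⁻¹ (1 - y / (1 - x) * v) = A⁻¹ (1 - x - v * y) := by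
    intro v
    rw [← map_mul]
    congr 1
    field_simp
  have G1 : -(1 : MulChar F ℂ) x * A⁻¹ (1 - x) * gauss2F1 A B' C' (y / (1 - x)) =
      ∑ v : F, -((1 : MulChar F ℂ) y * (B' * C') (-1) *
        (B' v * (B'⁻¹ * C') (1 - v)) * A⁻¹ (1 - x - v * y)) := by
    have ediv : (1 : MulChar F ℂ) (y / (1 - x)) = (1 : MulChar F ℂ) y := by
      rw [mc_one_apply, mc_one_apply]
      simp [div_eq_zero_iff, hx1]
    simp only [gauss2F1]
    rw [ediv, e_x]
    simp only [Finset.mul_sum, ← Finset.sum_neg_distrib]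
    refine Finset.sum_congr rfl fun v _ => ?_
    linear_combination (-((1 : MulChar F ℂ) y * (B' * C') (-1) *
      (B' v * (B'⁻¹ * C') (1 - v)))) * hAsplit v
  -- G2: the second Gauss term.
  have hBA : ∀ v : F, (A * B⁻¹)⁻¹ (1 - y * v) = (B * A⁻¹) (1 - v * y) := by
    intro v
    rw [mul_comm y v, mul_inv, inv_inv, mul_comm A⁻¹ B]
  have G2 : B⁻¹ x * binom (A * B⁻¹) B⁻¹ * gauss2F1 (A * B⁻¹) B' C' y =
      ∑ v : F, (1 : MulChar F ℂ) y * (B' * C') (-1) *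
        (B' v * (B'⁻¹ * C') (1 - v)) *
        (B⁻¹ x * (B * A⁻¹) (1 - v * y) * (∑ s : F, B s * A⁻¹ (1 - s))) := by
    simp only [gauss2F1]
    rw [binom_eq]
    set J := ∑ s : F, B s * A⁻¹ (1 - s) with hJdef
    simp only [Finset.mul_sum]
    refine Finset.sum_congr rfl fun v _ => ?_
    rw [hBA v]
    ring
  -- G3: the delta term.
  have G3 : ((Fintype.card F : ℂ) - 1) * deltaChar (A * B⁻¹) * A⁻¹ (-x) * C'⁻¹ y *
        (B'⁻¹ * C') (1 - y) =
      ∑ v : F, (1 : MulChar F ℂ) y * (B' * C') (-1) *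
        (B' v * (B'⁻¹ * C') (1 - v)) *
        (if 1 - v * y = 0 then A⁻¹ (-x) * ∑ w : F, (B * A⁻¹) w else 0) := by
    rcases eq_or_ne y 0 with rfl | hy
    · have hC : C'⁻¹ (0 : F) = 0 := MulChar.map_zero _
      rw [hC]
      simp
    · have hcond : ∀ v : F, (1 - v * y = 0) ↔ (v = y⁻¹) := by
        intro v
        rw [sub_eq_zero, eq_comm, ← eq_div_iff hy, one_div]
      have e_y : (1 : MulChar F ℂ) y = 1 := MulChar.one_apply (isUnit_iff_ne_zero.mpr hy)
      simp only [hcond, mul_ite, mul_zero]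
      rw [Finset.sum_ite_eq' univ (y⁻¹ : F), if_pos (Finset.mem_univ _)]
      rw [e_y, one_mul]
      have hK := mc_sum (B * A⁻¹)
      have hiff : (B * A⁻¹ = 1) ↔ (A * B⁻¹ = 1) := by
        rw [mul_inv_eq_one, mul_inv_eq_one]; exact eq_comm
      by_cases hAB : A * B⁻¹ = 1
      · rw [hK, if_pos (hiff.mpr hAB)]
        have hd : deltaChar (A * B⁻¹) = 1 := by rw [deltaChar, if_pos hAB]
        rw [hd]
        have := char_key B' C' hy
        linear_combination (-(A⁻¹ (-x) * ((Fintype.card F : ℂ) - 1))) * this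
      · rw [hK, if_neg (fun h => hAB (hiff.mp h))]
        have hd : deltaChar (A * B⁻¹) = 0 := by rw [deltaChar, if_neg hAB]
        rw [hd]
        ring
  rw [G0, G1, G2, G3, ← Finset.sum_add_distrib, ← Finset.sum_add_distrib]
  exact Finset.sum_congr rfl fun v _ => by ring
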